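/- Every separately continuous function f : ℝ × ℝ → ℝ restricted to the diagonal, g(x) = f(x,x), is a function of the first Baire class on ℝ. -/

import Mathlib

open Filter Topology Set

theorem stmt10 (f : ℝ × ℝ → ℝ)
    (hfx : ∀ x : ℝ, Continuous fun y => f (x, y))
    (hfy : ∀ y : ℝ, Continuous fun x => f (x, y)) :
    ∃ gs : ℕ → ℝ → ℝ, (∀ n, Continuous (gs n)) ∧
      ∀ x : ℝ, Tendsto (fun n => gs n x) atTop (𝓝 (f (x, x))) := by
  -- N = n+1 as a real
  set N : ℕ → ℝ := fun n => (n : ℝ) + 1 with hN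
  have hNpos : ∀ n, 0 < N n := fun n => by positivity
  -- affine blend on the interval [k/N, (k+1)/N]
  set h : ℕ → ℤ → ℝ → ℝ := fun n k x =>
    (1 - (N n * x - k)) * f (x, k / N n) + (N n * x - k) * f (x, (k + 1) / N n) with hh
  have hcont : ∀ n k, Continuous (h n k) := by
    intro n k
    exact (((continuous_const.sub ((continuous_const.mul continuous_id).sub
      continuous_const)).mul (hfy (k / N n)))).add
      (((continuous_const.mul continuous_id).sub continuous_const).mul (hfy ((k + 1) / N n)))
  refine ⟨fun n x => h n ⌊N n * x⌋ x, ?_, ?_⟩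
  · intro n
    -- gs n agrees with h n k on Icc (k/N) ((k+1)/N)
    have hEq : ∀ k : ℤ, EqOn (fun x => h n ⌊N n * x⌋ x) (h n k)
        (Icc ((k : ℝ) / N n) ((k + 1) / N n)) := by
      intro k x hx
      obtain ⟨h1, h2⟩ := hx
      rw [div_le_iff₀ (hNpos n)] at h1
      rw [le_div_iff₀ (hNpos n)] at h2
      rw [mul_comm] at h1 h2
      rcases lt_or_eq_of_le h2 with h2 | h2
      · have : ⌊N n * x⌋ = k := by
          rw [Int.floor_eq_iff]
          constructor
          · exact_mod_cast h1
          · exact_mod_cast h2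
        simp [this]
      · have : ⌊N n * x⌋ = k + 1 := by
          rw [Int.floor_eq_iff]
          push_cast
          constructor
          · linarith
          · linarith
        have hkx : N n * x - ((k : ℝ) + 1) = 0 := by rw [h2]; ring
        have hkx' : N n * x - (k : ℝ) = 1 := by rw [h2]; ring
        simp only [this, hh]
        push_cast
        rw [hkx, hkx']
        ring
    -- locally finite closed cover
    have hlf : LocallyFinite (fun k : ℤ => Icc ((k : ℝ) / N n) ((k + 1) / N n)) := by
      intro x
      refine ⟨Ioo (x - 1) (x + 1), Ioo_mem_nhds (by linarith) (by linarith), ?_⟩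
      apply Set.Finite.subset (Set.finite_Icc (⌈N n * (x - 1)⌉ - 1) ⌈N n * (x + 1)⌉)
      rintro k ⟨y, ⟨hy1, hy2⟩, hy3, hy4⟩
      rw [div_le_iff₀ (hNpos n)] at hy1
      rw [le_div_iff₀ (hNpos n)] at hy2
      have hN' := hNpos n
      have e1 : (k : ℝ) ≤ N n * (x + 1) := by nlinarith
      have e2 : N n * (x - 1) ≤ (k : ℝ) + 1 := by nlinarith
      constructor
      · have : ⌈N n * (x - 1)⌉ ≤ k + 1 := Int.ceil_le.mpr (by exact_mod_cast e2)
        omega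
      · have : (k : ℝ) ≤ (⌈N n * (x + 1)⌉ : ℝ) := le_trans e1 (Int.le_ceil _)
        exact_mod_cast this
    apply hlf.continuous
    · ext x
      simp only [mem_iUnion, mem_univ, iff_true]
      refine ⟨⌊N n * x⌋, ?_, ?_⟩
      · rw [div_le_iff₀ (hNpos n)]
        rw [mul_comm]
        exact Int.floor_le _
      · rw [le_div_iff₀ (hNpos n)]
        rw [mul_comm]
        push_cast
        exact le_of_lt (Int.lt_floor_add_one _)
    · exact fun k => isClosed_Icc
    · exact fun k => ((hcont n k).continuousOn).congr (hEq k)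
  · intro x
    set L := f (x, x) with hL
    -- grid points tend to x
    have ha : Tendsto (fun n => (⌊N n * x⌋ : ℝ) / N n) atTop (𝓝 x) := by
      have key : ∀ n, |(⌊N n * x⌋ : ℝ) / N n - x| ≤ 1 / N n := by
        intro n
        have h1 : (⌊N n * x⌋ : ℝ) ≤ N n * x := Int.floor_le _
        have h2 : N n * x < (⌊N n * x⌋ : ℝ) + 1 := Int.lt_floor_add_one _
        have hd : (⌊N n * x⌋ : ℝ) / N n - x = ((⌊N n * x⌋ : ℝ) - N n * x) / N n := by
          rw [sub_div, mul_div_cancel_left₀ x (hNpos n).ne']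
        rw [hd, abs_div, abs_of_pos (hNpos n), div_le_div_iff₀ (hNpos n) (hNpos n)]
        have : |(⌊N n * x⌋ : ℝ) - N n * x| ≤ 1 := by
          rw [abs_le]; constructor <;> linarith
        nlinarith [hNpos n]
      have h0 : Tendsto (fun n : ℕ => 1 / N n) atTop (𝓝 0) :=
        tendsto_one_div_add_atTop_nhds_zero_nat
      have := squeeze_zero (fun n => abs_nonneg _) key h0
      have := tendsto_zero_iff_abs_tendsto_zero (fun n => (⌊N n * x⌋ : ℝ) / N n - x) |>.mpr this
      simpa using this.add_const x
    have hb : Tendsto (fun n => ((⌊N n * x⌋ : ℝ) + 1) / N n) atTop (𝓝 x) := by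
      have : Tendsto (fun n => (⌊N n * x⌋ : ℝ) / N n + 1 / N n) atTop (𝓝 (x + 0)) :=
        ha.add tendsto_one_div_add_atTop_nhds_zero_nat
      simpa [add_div] using this
    have hA : Tendsto (fun n => f (x, (⌊N n * x⌋ : ℝ) / N n)) atTop (𝓝 L) :=
      ((hfx x).tendsto x).comp ha
    have hB : Tendsto (fun n => f (x, ((⌊N n * x⌋ : ℝ) + 1) / N n)) atTop (𝓝 L) :=
      ((hfx x).tendsto x).comp hb
    -- squeeze
    have key : ∀ n, |h n ⌊N n * x⌋ x - L| ≤
        |f (x, (⌊N n * x⌋ : ℝ) / N n) - L| + |f (x, ((⌊N n * x⌋ : ℝ) + 1) / N n) - L| := by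
      intro n
      set t := N n * x - (⌊N n * x⌋ : ℝ) with ht
      have ht0 : 0 ≤ t := by
        rw [ht, sub_nonneg]
        exact Int.floor_le _
      have ht1 : t ≤ 1 := by
        rw [ht]
        have := Int.lt_floor_add_one (N n * x)
        linarith
      have expand : h n ⌊N n * x⌋ x - L =
          (1 - t) * (f (x, (⌊N n * x⌋ : ℝ) / N n) - L) +
          t * (f (x, ((⌊N n * x⌋ : ℝ) + 1) / N n) - L) := by
        simp only [hh, ht]
        push_cast
        ring
      rw [expand]
      calc |(1 - t) * (f (x, (⌊N n * x⌋ : ℝ) / N n) - L) +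
          t * (f (x, ((⌊N n * x⌋ : ℝ) + 1) / N n) - L)|
          ≤ |(1 - t) * (f (x, (⌊N n * x⌋ : ℝ) / N n) - L)| +
            |t * (f (x, ((⌊N n * x⌋ : ℝ) + 1) / N n) - L)| := abs_add_le _ _
        _ = (1 - t) * |f (x, (⌊N n * x⌋ : ℝ) / N n) - L| +
            t * |f (x, ((⌊N n * x⌋ : ℝ) + 1) / N n) - L| := by
            rw [abs_mul, abs_mul, abs_of_nonneg (by linarith), abs_of_nonneg ht0]
        _ ≤ |f (x, (⌊N n * x⌋ : ℝ) / N n) - L| +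
            |f (x, ((⌊N n * x⌋ : ℝ) + 1) / N n) - L| := by
            have h1 := abs_nonneg (f (x, (⌊N n * x⌋ : ℝ) / N n) - L)
            have h2 := abs_nonneg (f (x, ((⌊N n * x⌋ : ℝ) + 1) / N n) - L)
            nlinarith
    have hsum : Tendsto (fun n => |f (x, (⌊N n * x⌋ : ℝ) / N n) - L| +
        |f (x, ((⌊N n * x⌋ : ℝ) + 1) / N n) - L|) atTop (𝓝 0) := by
      have h1 : Tendsto (fun n => f (x, (⌊N n * x⌋ : ℝ) / N n) - L) atTop (𝓝 0) := by
        simpa using hA.sub_const L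
      have h2 : Tendsto (fun n => f (x, ((⌊N n * x⌋ : ℝ) + 1) / N n) - L) atTop (𝓝 0) := by
        simpa using hB.sub_const L
      simpa using h1.abs.add h2.abs
    have := squeeze_zero (fun n => abs_nonneg _) key hsum
    have := tendsto_zero_iff_abs_tendsto_zero (fun n => h n ⌊N n * x⌋ x - L) |>.mpr this
    simpa using this.add_const L
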